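/- Let ι and κ be finite nonempty index types and let ρ : Matrix (ι × κ) (ι × κ) ℂ be a positive definite Hermitian matrix with Matrix.trace ρ = 1, whose marginals ρ_A := ptr₂ ρ and ρ_B := ptr₁ ρ are positive definite. Then the relative entropy between ρ and the product of its own marginals equals the mutual information: S(ρ ‖ ρ_A ⊗ₖ ρ_B) = S(ρ_A) + S(ρ_B) − S(ρ). -/

import Mathlib

open Matrix Kronecker
open scoped ComplexOrder

/-- `matLog ρ` is `Real.log` applied to a Hermitian matrix `ρ` through the
continuous functional calculus (`Matrix.IsHermitian.cfc`); junk value `0` on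
non-Hermitian matrices. -/
noncomputable def matLog {n : Type*} [Fintype n] [DecidableEq n]
    (ρ : Matrix n n ℂ) : Matrix n n ℂ :=
  if h : ρ.IsHermitian then h.cfc Real.log else 0

/-- The von Neumann entropy `S(ρ) = -Re (tr (ρ log ρ))`. -/
noncomputable def vnEntropy {n : Type*} [Fintype n] [DecidableEq n]
    (ρ : Matrix n n ℂ) : ℝ :=
  -(Matrix.trace (ρ * matLog ρ)).re

/-- The quantum relative entropy `S(ρ‖σ) = Re (tr (ρ (log ρ - log σ)))`. -/
noncomputable def relEnt {n : Type*} [Fintype n] [DecidableEq n]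
    (ρ σ : Matrix n n ℂ) : ℝ :=
  (Matrix.trace (ρ * (matLog ρ - matLog σ))).re

/-- Partial trace over the second tensor factor. -/
noncomputable def ptr₂ {ι κ : Type*} [Fintype κ]
    (M : Matrix (ι × κ) (ι × κ) ℂ) : Matrix ι ι ℂ :=
  Matrix.of fun i i' => ∑ k, M (i, k) (i', k)

/-- Partial trace over the first tensor factor. -/
noncomputable def ptr₁ {ι κ : Type*} [Fintype ι]
    (M : Matrix (ι × κ) (ι × κ) ℂ) : Matrix κ κ ℂ :=
  Matrix.of fun k k' => ∑ i, M (i, k) (i, k')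

section Aux

variable {n : Type*} [Fintype n] [DecidableEq n]

/-- Conjugation of a real diagonal by a unitary, as a star algebra hom on continuous
functions on a set containing the diagonal entries. -/
noncomputable def conjDiagHom (u : unitary (Matrix n n ℂ)) {s : Set ℝ}
    (d : n → s) : C(s, ℝ) →⋆ₐ[ℝ] Matrix n n ℂ where
  toFun := fun g => (u : Matrix n n ℂ) *
    diagonal (Complex.ofReal ∘ g ∘ d) * star (u : Matrix n n ℂ)
  map_one' := by simp [Pi.one_def (M := fun _ : n ↦ ℂ)]
  map_mul' f g := by
    have {a b c d e f : Matrix n n ℂ} : (a * b * c) * (d * e * f) = a * (b * (c * d) * e) * f := by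
      simp only [mul_assoc]
    simp only [this, ContinuousMap.coe_mul, SetLike.coe_mem, Unitary.star_mul_self_of_mem, mul_one,
      diagonal_mul_diagonal, Function.comp_apply]
    congr! with i
    simp
  map_zero' := by simp [Pi.zero_def (M := fun _ : n ↦ ℂ)]
  map_add' f g := by
    simp only [ContinuousMap.coe_add, ← add_mul, ← mul_add, diagonal_add, Function.comp_apply]
    congr! with i
    simp
  commutes' r := by
    simp only [Function.comp_def, algebraMap_apply, smul_eq_mul, mul_one]
    rw [← mul_one (algebraMap _ _ _), ← Unitary.coe_mul_star_self u,
      ← Algebra.left_comm, Unitary.coe_star, mul_assoc]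
    congr!
  map_star' f := by
    simp only [star_trivial, StarMul.star_mul, star_star, star_eq_conjTranspose (diagonal _),
      diagonal_conjTranspose, mul_assoc]
    congr!
    ext
    simp

lemma isSelfAdjoint_conjDiag (u : unitary (Matrix n n ℂ)) (d : n → ℝ) :
    _root_.IsSelfAdjoint ((u : Matrix n n ℂ) * diagonal (Complex.ofReal ∘ d)
      * star (u : Matrix n n ℂ)) := by
  have hD : star (diagonal (Complex.ofReal ∘ d)) = diagonal (Complex.ofReal ∘ d) := by
    rw [star_eq_conjTranspose, diagonal_conjTranspose]
    simp [funext_iff, Pi.star_apply, Complex.conj_ofReal, Function.comp]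
  rw [_root_.IsSelfAdjoint, StarMul.star_mul, StarMul.star_mul, star_star, hD, mul_assoc]

lemma cfc_unitary_conj (u : unitary (Matrix n n ℂ)) (d : n → ℝ) (f : ℝ → ℝ) :
    cfc f ((u : Matrix n n ℂ) * diagonal (Complex.ofReal ∘ d) * star (u : Matrix n n ℂ)) =
    (u : Matrix n n ℂ) * diagonal (Complex.ofReal ∘ f ∘ d) * star (u : Matrix n n ℂ) := by
  have hsa := isSelfAdjoint_conjDiag u d
  have hspec : spectrum ℝ ((u : Matrix n n ℂ) * diagonal (Complex.ofReal ∘ d)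
      * star (u : Matrix n n ℂ)) = Set.range d := by
    ext x
    rw [Unitary.spectrum_star_right_conjugate, ← spectrum.algebraMap_mem_iff ℂ,
      spectrum_diagonal, RCLike.algebraMap_eq_ofReal]
    constructor
    · rintro ⟨i, hi⟩
      exact ⟨i, Complex.ofReal_injective hi⟩
    · rintro ⟨i, hi⟩
      exact ⟨i, by simp [← hi]⟩
  have hd : ∀ i, d i ∈ spectrum ℝ ((u : Matrix n n ℂ) * diagonal (Complex.ofReal ∘ d)
      * star (u : Matrix n n ℂ)) := fun i => hspec ▸ ⟨i, rfl⟩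
  have h0 : FiniteDimensional ℝ C(spectrum ℝ ((u : Matrix n n ℂ)
      * diagonal (Complex.ofReal ∘ d) * star (u : Matrix n n ℂ)), ℝ) :=
    FiniteDimensional.of_injective (ContinuousMap.coeFnLinearMap ℝ (M := ℝ)) DFunLike.coe_injective
  let ψ := conjDiagHom u (fun i => (⟨d i, hd i⟩ : spectrum ℝ ((u : Matrix n n ℂ)
      * diagonal (Complex.ofReal ∘ d) * star (u : Matrix n n ℂ))))
  have hcont : Continuous ψ := ψ.toAlgHom.toLinearMap.continuous_of_finiteDimensional
  have hid : ψ (.restrict _ (.id ℝ)) = (u : Matrix n n ℂ) * diagonal (Complex.ofReal ∘ d)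
      * star (u : Matrix n n ℂ) := by
    congr!
  have key := cfcHom_eq_of_continuous_of_map_id hsa ψ hcont hid
  rw [cfc_apply f _ hsa (by rw [continuousOn_iff_continuous_restrict]; fun_prop), key]
  show (u : Matrix n n ℂ) * _ * star (u : Matrix n n ℂ) = _
  congr!


variable {ι κ : Type*} [Fintype ι] [Fintype κ] [DecidableEq ι] [DecidableEq κ]

lemma kronecker_conjTranspose (A : Matrix ι ι ℂ) (B : Matrix κ κ ℂ) :
    (A ⊗ₖ B)ᴴ = Aᴴ ⊗ₖ Bᴴ := by
  ext ⟨i, k⟩ ⟨i', k'⟩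
  simp [conjTranspose_apply, kroneckerMap_apply, mul_comm]

lemma kronecker_mem_unitary (U : unitary (Matrix ι ι ℂ)) (V : unitary (Matrix κ κ ℂ)) :
    ((U : Matrix ι ι ℂ) ⊗ₖ (V : Matrix κ κ ℂ)) ∈ unitary (Matrix (ι × κ) (ι × κ) ℂ) := by
  constructor
  · rw [star_eq_conjTranspose, kronecker_conjTranspose, ← star_eq_conjTranspose,
      ← star_eq_conjTranspose, ← mul_kronecker_mul,
      Unitary.coe_star_mul_self, Unitary.coe_star_mul_self, one_kronecker_one]
  · rw [star_eq_conjTranspose, kronecker_conjTranspose, ← star_eq_conjTranspose,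
      ← star_eq_conjTranspose, ← mul_kronecker_mul,
      Unitary.mul_star_self_of_mem U.2, Unitary.mul_star_self_of_mem V.2, one_kronecker_one]


lemma matLog_eq_triple {n : Type*} [Fintype n] [DecidableEq n] {A : Matrix n n ℂ}
    (hA : A.IsHermitian) :
    matLog A = (hA.eigenvectorUnitary : Matrix n n ℂ)
      * diagonal (Complex.ofReal ∘ Real.log ∘ hA.eigenvalues)
      * star (hA.eigenvectorUnitary : Matrix n n ℂ) := by
  rw [matLog, dif_pos hA]
  rfl

lemma ofReal_eq : (RCLike.ofReal : ℝ → ℂ) = Complex.ofReal := rfl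

lemma kron_conj_left (U : unitary (Matrix ι ι ℂ)) (V : unitary (Matrix κ κ ℂ))
    (X : Matrix ι ι ℂ) :
    ((U : Matrix ι ι ℂ) ⊗ₖ (V : Matrix κ κ ℂ)) * (X ⊗ₖ (1 : Matrix κ κ ℂ))
      * (star (U : Matrix ι ι ℂ) ⊗ₖ star (V : Matrix κ κ ℂ))
      = ((U : Matrix ι ι ℂ) * X * star (U : Matrix ι ι ℂ)) ⊗ₖ (1 : Matrix κ κ ℂ) := by
  rw [← mul_kronecker_mul, ← mul_kronecker_mul, mul_one, Unitary.mul_star_self_of_mem V.2]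

lemma kron_conj_right (U : unitary (Matrix ι ι ℂ)) (V : unitary (Matrix κ κ ℂ))
    (Y : Matrix κ κ ℂ) :
    ((U : Matrix ι ι ℂ) ⊗ₖ (V : Matrix κ κ ℂ)) * ((1 : Matrix ι ι ℂ) ⊗ₖ Y)
      * (star (U : Matrix ι ι ℂ) ⊗ₖ star (V : Matrix κ κ ℂ))
      = (1 : Matrix ι ι ℂ) ⊗ₖ ((V : Matrix κ κ ℂ) * Y * star (V : Matrix κ κ ℂ)) := by
  rw [← mul_kronecker_mul, ← mul_kronecker_mul, mul_one, Unitary.mul_star_self_of_mem U.2]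

lemma matLog_kronecker (A : Matrix ι ι ℂ) (B : Matrix κ κ ℂ) (hA : A.PosDef) (hB : B.PosDef) :
    matLog (A ⊗ₖ B) = matLog A ⊗ₖ (1 : Matrix κ κ ℂ) + (1 : Matrix ι ι ℂ) ⊗ₖ matLog B := by
  have hA1 := hA.1
  have hB1 := hB.1
  set U := hA1.eigenvectorUnitary with hU
  set V := hB1.eigenvectorUnitary with hV
  set a := hA1.eigenvalues with ha
  set b := hB1.eigenvalues with hb
  set d : ι × κ → ℝ := fun p => a p.1 * b p.2 with hdd
  let W : unitary (Matrix (ι × κ) (ι × κ) ℂ) :=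
    ⟨(U : Matrix ι ι ℂ) ⊗ₖ (V : Matrix κ κ ℂ), kronecker_mem_unitary U V⟩
  have hWstar : star (W : Matrix (ι × κ) (ι × κ) ℂ)
      = star (U : Matrix ι ι ℂ) ⊗ₖ star (V : Matrix κ κ ℂ) := by
    show star ((U : Matrix ι ι ℂ) ⊗ₖ (V : Matrix κ κ ℂ)) = _
    rw [star_eq_conjTranspose, kronecker_conjTranspose, star_eq_conjTranspose,
      star_eq_conjTranspose]
  have hAB : A ⊗ₖ B = (W : Matrix (ι × κ) (ι × κ) ℂ)
      * diagonal (Complex.ofReal ∘ d) * star (W : Matrix (ι × κ) (ι × κ) ℂ) := by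
    rw [hWstar]
    conv_lhs => rw [hA1.spectral_theorem, hB1.spectral_theorem, Unitary.conjStarAlgAut_apply,
      Unitary.conjStarAlgAut_apply]
    rw [mul_kronecker_mul, mul_kronecker_mul, diagonal_kronecker_diagonal]
    show ((U : Matrix ι ι ℂ) ⊗ₖ (V : Matrix κ κ ℂ)) * _ * _ = _
    congr 2
    rw [diagonal_eq_diagonal_iff]
    intro p
    simp [hdd, ofReal_eq, ha, hb]
  have hH : (A ⊗ₖ B).IsHermitian := by
    rw [hAB]; exact isSelfAdjoint_conjDiag W d
  have hlog : matLog (A ⊗ₖ B) = (W : Matrix (ι × κ) (ι × κ) ℂ)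
      * diagonal (Complex.ofReal ∘ Real.log ∘ d) * star (W : Matrix (ι × κ) (ι × κ) ℂ) := by
    rw [matLog, dif_pos hH, ← hH.cfc_eq]
    conv_lhs => rw [hAB]
    exact cfc_unitary_conj W d Real.log
  have hdiag : diagonal (Complex.ofReal ∘ Real.log ∘ d)
      = diagonal (Complex.ofReal ∘ Real.log ∘ a) ⊗ₖ (1 : Matrix κ κ ℂ)
        + (1 : Matrix ι ι ℂ) ⊗ₖ diagonal (Complex.ofReal ∘ Real.log ∘ b) := by
    rw [show (1 : Matrix κ κ ℂ) = diagonal (fun _ => 1) from (diagonal_one).symm,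
      show (1 : Matrix ι ι ℂ) = diagonal (fun _ => 1) from (diagonal_one).symm,
      diagonal_kronecker_diagonal, diagonal_kronecker_diagonal, diagonal_add]
    rw [diagonal_eq_diagonal_iff]
    intro p
    have hlm : Real.log (a p.1 * b p.2) = Real.log (a p.1) + Real.log (b p.2) :=
      Real.log_mul (ne_of_gt (hA.eigenvalues_pos p.1)) (ne_of_gt (hB.eigenvalues_pos p.2))
    simp only [hdd, Function.comp_apply, Pi.add_apply, ← ha, ← hb, hlm, Complex.ofReal_add]
    ring
  rw [hlog, hdiag, mul_add, add_mul, hWstar]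
  show ((U : Matrix ι ι ℂ) ⊗ₖ (V : Matrix κ κ ℂ)) * _ * _
      + ((U : Matrix ι ι ℂ) ⊗ₖ (V : Matrix κ κ ℂ)) * _ * _ = _
  rw [kron_conj_left, kron_conj_right, matLog_eq_triple hA1, matLog_eq_triple hB1]

lemma trace_mul_kron_one (ρ : Matrix (ι × κ) (ι × κ) ℂ) (X : Matrix ι ι ℂ) :
    Matrix.trace (ρ * (X ⊗ₖ (1 : Matrix κ κ ℂ))) = Matrix.trace (ptr₂ ρ * X) := by
  have hentry : ∀ (i : ι) (k : κ), (ρ * (X ⊗ₖ (1 : Matrix κ κ ℂ))) (i, k) (i, k)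
      = ∑ i', ρ (i, k) (i', k) * X i' i := by
    intro i k
    rw [Matrix.mul_apply, Fintype.sum_prod_type]
    simp only [kroneckerMap_apply, Matrix.one_apply, mul_ite, mul_one, mul_zero,
      Finset.sum_ite_eq', Finset.mem_univ, if_true]
  rw [Matrix.trace, Matrix.trace]
  simp only [Matrix.diag, Fintype.sum_prod_type, hentry, Matrix.mul_apply, ptr₂, of_apply,
    Finset.sum_mul]
  refine Finset.sum_congr rfl fun i _ => ?_
  rw [Finset.sum_comm]

lemma trace_mul_one_kron (ρ : Matrix (ι × κ) (ι × κ) ℂ) (Y : Matrix κ κ ℂ) :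
    Matrix.trace (ρ * ((1 : Matrix ι ι ℂ) ⊗ₖ Y)) = Matrix.trace (ptr₁ ρ * Y) := by
  have hentry : ∀ (i : ι) (k : κ), (ρ * ((1 : Matrix ι ι ℂ) ⊗ₖ Y)) (i, k) (i, k)
      = ∑ k', ρ (i, k) (i, k') * Y k' k := by
    intro i k
    rw [Matrix.mul_apply, Fintype.sum_prod_type, Finset.sum_comm]
    simp only [kroneckerMap_apply, Matrix.one_apply, ite_mul, one_mul, zero_mul, mul_ite,
      mul_zero, Finset.sum_ite_eq', Finset.mem_univ, if_true]
  rw [Matrix.trace, Matrix.trace]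
  simp only [Matrix.diag, Fintype.sum_prod_type, hentry, Matrix.mul_apply, ptr₁, of_apply,
    Finset.sum_mul]
  rw [Finset.sum_comm]
  refine Finset.sum_congr rfl fun k _ => ?_
  rw [Finset.sum_comm]

end Aux

/-- The relative entropy between a state and the product of its own marginals
equals the mutual information: `S(ρ ‖ ρ_A ⊗ₖ ρ_B) = S(ρ_A) + S(ρ_B) - S(ρ)`. -/
theorem relEnt_to_own_marginals {ι κ : Type*} [Fintype ι] [Fintype κ]
    [DecidableEq ι] [DecidableEq κ] [Nonempty ι] [Nonempty κ]
    (ρ : Matrix (ι × κ) (ι × κ) ℂ) (hρ : ρ.PosDef)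
    (hρ1 : Matrix.trace ρ = 1)
    (hA : (ptr₂ ρ).PosDef) (hB : (ptr₁ ρ).PosDef) :
    relEnt ρ (ptr₂ ρ ⊗ₖ ptr₁ ρ) =
      vnEntropy (ptr₂ ρ) + vnEntropy (ptr₁ ρ) - vnEntropy ρ := by
  rw [relEnt, mul_sub, trace_sub, matLog_kronecker _ _ hA hB, mul_add, trace_add,
    trace_mul_kron_one, trace_mul_one_kron, vnEntropy, vnEntropy, vnEntropy]
  simp [Complex.sub_re, Complex.add_re]
  ring
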